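/- Suppose the norm ν on E is order continuous and E is an AL-space, i.e., ν(x + y) = ν(x) + ν(y) whenever x, y ∈ E, 0 ≤ x, 0 ≤ y and x ∧ y = 0. Then E^t is an AL-space with respect to ρ: for all x, y ∈ E^t with 0 ≤ x, 0 ≤ y and x ∧ y = 0 one has ρ(x + y) = ρ(x) + ρ(y). -/

import Mathlib

theorem stmt5
    {G : Type*} [Lattice G] [AddCommGroup G] [Module ℝ G]
    [CovariantClass G G (· + ·) (· ≤ ·)] [PosSMulMono ℝ G]
    (arch : ∀ x y : G, (∀ n : ℕ, n • x ≤ y) → x ≤ 0)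
    (E : Set G)
    (hE0 : (0 : G) ∈ E)
    (hEadd : ∀ x ∈ E, ∀ y ∈ E, x + y ∈ E)
    (hEsmul : ∀ (c : ℝ), ∀ x ∈ E, c • x ∈ E)
    (hEsup : ∀ x ∈ E, ∀ y ∈ E, x ⊔ y ∈ E)
    (hEinf : ∀ x ∈ E, ∀ y ∈ E, x ⊓ y ∈ E)
    (hdense : ∀ x : G, 0 < x → ∃ y ∈ E, 0 < y ∧ y ≤ x)
    (hmaj : ∀ x : G, ∃ y ∈ E, x ≤ y)
    (ν : G → ℝ)
    (hν_zero : ∀ x ∈ E, (ν x = 0 ↔ x = 0))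
    (hν_smul : ∀ (c : ℝ), ∀ x ∈ E, ν (c • x) = |c| * ν x)
    (hν_add : ∀ x ∈ E, ∀ y ∈ E, ν (x + y) ≤ ν x + ν y)
    (hν_mono : ∀ x ∈ E, ∀ y ∈ E, |x| ≤ |y| → ν x ≤ ν y)
    (ρ : G → ℝ)
    (hρ : ∀ x : G, ρ x = sSup (ν '' {z | z ∈ E ∧ 0 ≤ z ∧ z ≤ |x|}))
    (ι : G → ℝ)
    (hι : ∀ x : G, ι x = sInf (ν '' {y | y ∈ E ∧ |x| ≤ y}))
    (Et : Set G)
    (hEEt : E ⊆ Et)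
    (hEtadd : ∀ x ∈ Et, ∀ y ∈ Et, x + y ∈ Et)
    (hEtsmul : ∀ (c : ℝ), ∀ x ∈ Et, c • x ∈ Et)
    (hEtsup : ∀ x ∈ Et, ∀ y ∈ Et, x ⊔ y ∈ Et)
    (hEtinf : ∀ x ∈ Et, ∀ y ∈ Et, x ⊓ y ∈ Et)
    (hEt : ∀ x ∈ Et, ι x = ρ x)
    (hoc : ∀ D : Set G, D.Nonempty → D ⊆ E → (∀ d ∈ D, 0 ≤ d) →
      DirectedOn (· ≥ ·) D → IsGLB D 0 → sInf (ν '' D) = 0)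
    (hAL : ∀ x ∈ E, ∀ y ∈ E, 0 ≤ x → 0 ≤ y → x ⊓ y = 0 → ν (x + y) = ν x + ν y) :
    ∀ x ∈ Et, ∀ y ∈ Et, 0 ≤ x → 0 ≤ y → x ⊓ y = 0 → ρ (x + y) = ρ x + ρ y := by
  -- basic facts about ν
  have hν0 : ν 0 = 0 := by
    have := hν_smul 0 0 hE0
    simpa using this
  have hνnn : ∀ z ∈ E, 0 ≤ ν z := by
    intro z hz
    have hnz : -z ∈ E := by simpa using hEsmul (-1) z hz
    have h1 := hν_add z hz (-z) hnz
    have h2 : ν (-z) = ν z := by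
      have := hν_smul (-1) z hz; simpa using this
    simp only [add_neg_cancel, hν0] at h1
    linarith
  -- the sets defining ρ and ι
  set S : G → Set ℝ := fun w => ν '' {z | z ∈ E ∧ 0 ≤ z ∧ z ≤ |w|} with hS
  set T : G → Set ℝ := fun w => ν '' {u | u ∈ E ∧ |w| ≤ u} with hT
  have hSne : ∀ w : G, (S w).Nonempty := by
    intro w
    exact ⟨ν 0, ⟨0, ⟨hE0, le_refl 0, abs_nonneg w⟩, rfl⟩⟩
  have hSbdd : ∀ w : G, BddAbove (S w) := by
    intro w
    obtain ⟨m, hmE, hm⟩ := hmaj |w|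
    refine ⟨ν m, ?_⟩
    rintro r ⟨z, ⟨hzE, hz0, hzw⟩, rfl⟩
    apply hν_mono z hzE m hmE
    rw [abs_of_nonneg hz0, abs_of_nonneg ((abs_nonneg w).trans hm)]
    exact hzw.trans hm
  have hTne : ∀ w : G, (T w).Nonempty := by
    intro w
    obtain ⟨m, hmE, hm⟩ := hmaj |w|
    exact ⟨ν m, ⟨m, ⟨hmE, hm⟩, rfl⟩⟩
  have hTbdd : ∀ w : G, BddBelow (T w) := by
    intro w
    refine ⟨0, ?_⟩
    rintro r ⟨u, ⟨huE, _⟩, rfl⟩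
    exact hνnn u huE
  -- ρ is monotone on nonneg elements
  have hρmono : ∀ a b : G, 0 ≤ a → a ≤ b → ρ a ≤ ρ b := by
    intro a b ha hab
    rw [hρ a, hρ b]
    apply csSup_le_csSup (hSbdd b) (hSne a)
    rintro r ⟨z, ⟨hzE, hz0, hza⟩, rfl⟩
    refine ⟨z, ⟨hzE, hz0, ?_⟩, rfl⟩
    rw [abs_of_nonneg (ha.trans hab)]
    rw [abs_of_nonneg ha] at hza
    exact hza.trans hab
  -- key subadditivity lemma: if z ∈ E decomposes as a + b with a,b ∈ Et nonneg,
  -- then ν z ≤ ρ a + ρ b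
  have hsub : ∀ z ∈ E, ∀ a ∈ Et, ∀ b ∈ Et, 0 ≤ a → 0 ≤ b → z = a + b →
      ν z ≤ ρ a + ρ b := by
    intro z hzE a haEt b hbEt ha0 hb0 hzab
    have key : ∀ u ∈ T a, ∀ v ∈ T b, ν z ≤ u + v := by
      rintro _ ⟨u, ⟨huE, hua⟩, rfl⟩ _ ⟨v, ⟨hvE, hvb⟩, rfl⟩
      rw [abs_of_nonneg ha0] at hua
      rw [abs_of_nonneg hb0] at hvb
      have huv : z ≤ u + v := by rw [hzab]; exact add_le_add hua hvb
      have hz0 : 0 ≤ z := by rw [hzab]; exact add_nonneg ha0 hb0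
      have h1 : ν z ≤ ν (u + v) := by
        apply hν_mono z hzE (u + v) (hEadd u huE v hvE)
        rw [abs_of_nonneg hz0, abs_of_nonneg (hz0.trans huv)]
        exact huv
      exact h1.trans (hν_add u huE v hvE)
    have h2 : ∀ u ∈ T a, ν z - u ≤ sInf (T b) := by
      intro u hu
      apply le_csInf (hTne b)
      intro v hv
      linarith [key u hu v hv]
    have h3 : ν z - sInf (T b) ≤ sInf (T a) := by
      apply le_csInf (hTne a)
      intro u hu
      linarith [h2 u hu]
    have hia : ι a = ρ a := hEt a haEt
    have hib : ι b = ρ b := hEt b hbEt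
    rw [← hia, ← hib, hι a, hι b]
    show ν z ≤ sInf (T a) + sInf (T b)
    linarith
  intro x hx y hy hx0 hy0 hxy
  have habsxy : |x + y| = x + y := abs_of_nonneg (add_nonneg hx0 hy0)
  -- ρ is nonneg
  have hρnn : ∀ w : G, 0 ≤ ρ w := by
    intro w
    rw [hρ w]
    have : (0 : ℝ) ∈ S w := by
      rw [← hν0]; exact ⟨0, ⟨hE0, le_refl 0, abs_nonneg w⟩, rfl⟩
    exact le_csSup (hSbdd w) this
  apply le_antisymm
  · -- ρ(x+y) ≤ ρ x + ρ y
    rw [hρ (x + y)]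
    apply Real.sSup_le
    · rintro r ⟨z, ⟨hzE, hz0, hzxy⟩, rfl⟩
      rw [habsxy] at hzxy
      set a := z ⊓ x with ha
      set b := z - a with hb
      have haEt : a ∈ Et := hEtinf z (hEEt hzE) x hx
      have hbEt : b ∈ Et := by
        have h : b = z + (-1 : ℝ) • a := by rw [neg_one_smul, hb]; abel
        rw [h]
        exact hEtadd z (hEEt hzE) _ (hEtsmul (-1) a haEt)
      have ha0 : 0 ≤ a := le_inf hz0 hx0
      have hb0 : 0 ≤ b := by
        rw [hb]
        exact sub_nonneg.2 inf_le_left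
      have hzab : z = a + b := by rw [hb]; abel
      have hax : a ≤ x := inf_le_right
      have hby : b ≤ y := by
        rw [hb, ha, sub_inf]
        apply sup_le
        · simpa using hy0
        · exact sub_le_iff_le_add'.2 hzxy
      have h1 := hsub z hzE a haEt b hbEt ha0 hb0 hzab
      have h2 := hρmono a x ha0 hax
      have h3 := hρmono b y hb0 hby
      linarith
    · exact add_nonneg (hρnn x) (hρnn y)
  · -- ρ x + ρ y ≤ ρ(x+y)
    have key : ∀ u ∈ S x, ∀ v ∈ S y, u + v ≤ ρ (x + y) := by
      rintro _ ⟨z₁, ⟨hz₁E, hz₁0, hz₁x⟩, rfl⟩ _ ⟨z₂, ⟨hz₂E, hz₂0, hz₂y⟩, rfl⟩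
      rw [abs_of_nonneg hx0] at hz₁x
      rw [abs_of_nonneg hy0] at hz₂y
      have hdisj : z₁ ⊓ z₂ = 0 := by
        apply le_antisymm
        · rw [← hxy]; exact inf_le_inf hz₁x hz₂y
        · exact le_inf hz₁0 hz₂0
      have hAL' := hAL z₁ hz₁E z₂ hz₂E hz₁0 hz₂0 hdisj
      have hmem : ν (z₁ + z₂) ∈ S (x + y) := by
        refine ⟨z₁ + z₂, ⟨hEadd z₁ hz₁E z₂ hz₂E, add_nonneg hz₁0 hz₂0, ?_⟩, rfl⟩
        rw [habsxy]
        exact add_le_add hz₁x hz₂y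
      have := le_csSup (hSbdd (x + y)) hmem
      rw [hρ (x + y)]
      rw [hAL'] at this
      exact this
    have h2 : ∀ v ∈ S y, sSup (S x) + v ≤ ρ (x + y) := by
      intro v hv
      have : sSup (S x) ≤ ρ (x + y) - v := by
        apply csSup_le (hSne x)
        intro u hu
        linarith [key u hu v hv]
      linarith
    have h3 : sSup (S y) ≤ ρ (x + y) - sSup (S x) := by
      apply csSup_le (hSne y)
      intro v hv
      linarith [h2 v hv]
    rw [hρ x, hρ y]
    show sSup (S x) + sSup (S y) ≤ ρ (x + y)
    linarith
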